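/- (Theorem 2, part I.) Suppose the series Σ_{j=0}^∞ ω(j)·c_j converges. Then for every natural number N, the truncation L(N, t̄) = Σ_{j=0}^{N} ω(j)·c_j + (1 − Σ_{j=0}^{N} ω(j))·c_{N+1} is a lower bound: L(N, t̄) ≤ Σ_{j=0}^∞ ω(j)·c_j. -/

import Mathlib

open Matrix Filter

lemma aux_trace_nonneg {m : Type*} [Fintype m] [DecidableEq m] {M : Matrix m m ℝ}
    (h : M.PosSemidef) : 0 ≤ M.trace := by
  rw [Matrix.trace]
  refine Finset.sum_nonneg fun i _ => ?_
  simpa using h.diag_nonneg (i := i)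

lemma aux_shift_sum (f : ℕ → ℝ) (k : ℕ) :
    ∀ J, ∑ j ∈ Finset.range J, (if k ≤ j then f (j - k) else 0)
      = ∑ l ∈ Finset.range (J - k), f l := by
  intro J
  induction J with
  | zero => simp
  | succ J ih =>
    rw [Finset.sum_range_succ, ih]
    by_cases h : k ≤ J
    · rw [if_pos h]
      have : J + 1 - k = (J - k) + 1 := by omega
      rw [this, Finset.sum_range_succ]
    · rw [if_neg h]
      have : J + 1 - k = J - k := by omega
      rw [this, add_zero]

lemma aux_tsum_eq {f : ℕ → ℝ} {L : ℝ} (h0 : ∀ m, 0 ≤ f m)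
    (hb : ∀ m, ∑ i ∈ Finset.range m, f i ≤ L)
    (hl : Tendsto (fun m => ∑ i ∈ Finset.range m, f i) atTop (nhds L)) :
    Summable f ∧ ∑' i, f i = L := by
  have hs := summable_of_sum_range_le h0 hb
  exact ⟨hs, tendsto_nhds_unique hs.hasSum.tendsto_sum_nat hl⟩

lemma aux_shift_tsum (f : ℕ → ℝ) (h0 : ∀ j, 0 ≤ f j) (hf : Summable f) (k : ℕ) :
    Summable (fun j => if k ≤ j then f (j - k) else 0)
      ∧ (∑' j, if k ≤ j then f (j - k) else 0) = ∑' j, f j := by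
  have h0' : ∀ j, 0 ≤ if k ≤ j then f (j - k) else 0 := by
    intro j; split_ifs <;> simp [h0]
  have hb : ∀ m, ∑ i ∈ Finset.range m, (if k ≤ i then f (i - k) else 0) ≤ ∑' j, f j := by
    intro m; rw [aux_shift_sum]
    exact Summable.sum_le_tsum _ (fun i _ => h0 i) hf
  have hl : Tendsto (fun m => ∑ i ∈ Finset.range m, (if k ≤ i then f (i - k) else 0))
      atTop (nhds (∑' j, f j)) := by
    have h1 : Tendsto (fun m => ∑ l ∈ Finset.range (m - k), f l) atTop (nhds (∑' j, f j)) :=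
      hf.hasSum.tendsto_sum_nat.comp (tendsto_sub_atTop_nat k)
    exact h1.congr (fun m => (aux_shift_sum f k m).symm)
  exact aux_tsum_eq h0' hb hl

set_option maxHeartbeats 2000000 in
theorem truncation_lower_bound
    (lam lam_e : ℝ) (hlam0 : 0 < lam) (hlam1 : lam < 1)
    (hle0 : 0 < lam_e) (hle1 : lam_e < 1)
    (tbar : ℕ)
    (φ : ℕ → ℝ)
    (hφ0 : φ 0 = lam * lam_e / (lam * (tbar : ℝ) + 1))
    (hφ1 : ∀ j, j < tbar → φ (j + 1) = (1 - lam) * (1 - lam_e) * φ j)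
    (hφ2 : ∀ j, tbar ≤ j → φ (j + 1) =
      (1 - lam) * (1 - lam_e) * φ j + lam * (1 - lam_e) * φ (j - tbar))
    (ω : ℕ → ℝ)
    (hω0 : ω 0 = lam_e / (lam * (tbar : ℝ) + 1))
    (hω1 : ∀ j, 1 ≤ j → j ≤ tbar →
      ω j = (1 - lam) * (1 - lam_e) * ω (j - 1) + φ 0)
    (hω2 : ∀ j, tbar + 1 ≤ j →
      ω j = (1 - lam) * (1 - lam_e) * ω (j - 1) + φ 0
        - lam_e * ∑ l ∈ Finset.range (j - tbar), φ l)
    (n : ℕ) (hn : 0 < n)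
    (A Q Pbar : Matrix (Fin n) (Fin n) ℝ)
    (hQ : Q.PosSemidef) (hP : Pbar.PosSemidef)
    (hloewner : (A * Pbar * Aᵀ + Q - Pbar).PosSemidef)
    (c : ℕ → ℝ) (hc : ∀ j, c j = ((fun X => A * X * Aᵀ + Q)^[j] Pbar).trace)
    (hsum : Summable fun j : ℕ => ω j * c j) :
    ∀ N : ℕ,
      (∑ j ∈ Finset.range (N + 1), ω j * c j)
        + (1 - ∑ j ∈ Finset.range (N + 1), ω j) * c (N + 1)
      ≤ ∑' j : ℕ, ω j * c j := by
  have hD : (0:ℝ) < lam * (tbar : ℝ) + 1 := by positivity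
  set α : ℝ := (1 - lam) * (1 - lam_e) with hα
  set β : ℝ := lam * (1 - lam_e) with hβ
  have hα0 : 0 ≤ α := by nlinarith
  have hβ0 : 0 ≤ β := by nlinarith
  have hαβ : α + β = 1 - lam_e := by rw [hα, hβ]; ring
  have h1α : 0 < 1 - α := by nlinarith
  -- unified φ recurrence
  have hφrec : ∀ j, φ (j + 1) = α * φ j + β * (if tbar ≤ j then φ (j - tbar) else 0) := by
    intro j
    by_cases h : tbar ≤ j
    · rw [if_pos h, hφ2 j h]
    · rw [if_neg h, hφ1 j (by omega)]; ring
  have hφ0nn : 0 ≤ φ 0 := by rw [hφ0]; positivity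
  have hφnn : ∀ j, 0 ≤ φ j := by
    intro j
    induction j using Nat.strong_induction_on with
    | _ j ih =>
      match j with
      | 0 => exact hφ0nn
      | Nat.succ j =>
        rw [hφrec]
        have h1 := ih j (by omega)
        split_ifs with h
        · exact add_nonneg (mul_nonneg hα0 h1) (mul_nonneg hβ0 (ih _ (by omega)))
        · simpa using mul_nonneg hα0 h1
  -- partial sums of φ are bounded
  have hX : lam_e * (φ 0 / lam_e) = φ 0 := by field_simp
  have hPbound : ∀ J, ∑ j ∈ Finset.range J, φ j ≤ φ 0 / lam_e := by
    intro J
    induction J using Nat.strong_induction_on with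
    | _ J ih =>
      match J with
      | 0 => simp; positivity
      | Nat.succ J =>
        rw [Finset.sum_range_succ']
        have e1 : ∑ j ∈ Finset.range J, φ (j + 1)
            = α * ∑ j ∈ Finset.range J, φ j
              + β * ∑ l ∈ Finset.range (J - tbar), φ l := by
          rw [← aux_shift_sum φ tbar J, Finset.mul_sum, Finset.mul_sum, ← Finset.sum_add_distrib]
          exact Finset.sum_congr rfl fun j _ => hφrec j
        rw [e1]
        have h1 := ih J (by omega)
        have h2 : ∑ l ∈ Finset.range (J - tbar), φ l ≤ φ 0 / lam_e := by
          rcases Nat.eq_or_lt_of_le (Nat.zero_le J) with h | h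
          · simp [← h]; positivity
          · calc ∑ l ∈ Finset.range (J - tbar), φ l
                ≤ ∑ l ∈ Finset.range J, φ l :=
                  Finset.sum_le_sum_of_subset_of_nonneg
                    (Finset.range_subset_range.2 (by omega)) (fun i _ _ => hφnn i)
              _ ≤ φ 0 / lam_e := h1
        nlinarith [mul_le_mul_of_nonneg_left h1 hα0, mul_le_mul_of_nonneg_left h2 hβ0]
  have hφsum : Summable φ := summable_of_sum_range_le hφnn hPbound
  set S : ℝ := ∑' j, φ j with hSdef
  have hSnn : 0 ≤ S := tsum_nonneg hφnn
  have hPS : ∀ J, ∑ j ∈ Finset.range J, φ j ≤ S := fun J =>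
    Summable.sum_le_tsum _ (fun i _ => hφnn i) hφsum
  -- λ_e * S = φ 0
  have hshift := aux_shift_tsum φ hφnn hφsum tbar
  have hS : lam_e * S = φ 0 := by
    have h1 : S = φ 0 + ∑' j, φ (j + 1) := Summable.tsum_eq_zero_add hφsum
    have h2 : ∑' j, φ (j + 1) = α * S + β * S := by
      have hs1 : Summable fun j => α * φ j := hφsum.mul_left α
      have hs2 : Summable fun j => β * (if tbar ≤ j then φ (j - tbar) else 0) :=
        hshift.1.mul_left β
      calc ∑' j, φ (j + 1)
          = ∑' j, (α * φ j + β * (if tbar ≤ j then φ (j - tbar) else 0)) := by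
            exact tsum_congr hφrec
        _ = α * S + β * S := by
            rw [Summable.tsum_add hs1 hs2, tsum_mul_left, tsum_mul_left, hshift.2]
    nlinarith [h1, h2]
  -- the first moment M = ∑' j, j * φ j
  set K : ℝ := (α + β * ((tbar : ℝ) + 1)) * S / lam_e with hKdef
  have hKnn : 0 ≤ K := by
    have : 0 ≤ α + β * ((tbar : ℝ) + 1) := by positivity
    positivity
  have hK : lam_e * K = (α + β * ((tbar : ℝ) + 1)) * S := by
    rw [hKdef]; field_simp
  -- termwise identity for (j+1) * φ (j+1)
  have hgrec : ∀ j : ℕ, ((j : ℝ) + 1) * φ (j + 1)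
      = α * (((j : ℝ) + 1) * φ j)
        + β * (if tbar ≤ j then (((j - tbar : ℕ) : ℝ) + (tbar : ℝ) + 1) * φ (j - tbar) else 0) := by
    intro j
    rw [hφrec]
    split_ifs with h
    · have : ((j - tbar : ℕ) : ℝ) = (j : ℝ) - (tbar : ℝ) := by
        push_cast [Nat.cast_sub h]; ring
      rw [this]; ring
    · ring
  have hMbound : ∀ J, ∑ j ∈ Finset.range J, (j : ℝ) * φ j ≤ K := by
    intro J
    induction J using Nat.strong_induction_on with
    | _ J ih =>
      match J with
      | 0 => simpa using hKnn
      | Nat.succ J =>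
        rw [Finset.sum_range_succ']
        push_cast
        have e1 : ∑ j ∈ Finset.range J, ((j : ℝ) + 1) * φ (j + 1)
            = α * ∑ j ∈ Finset.range J, ((j : ℝ) + 1) * φ j
              + β * ∑ l ∈ Finset.range (J - tbar), (((l : ℝ)) + (tbar : ℝ) + 1) * φ l := by
          rw [← aux_shift_sum (fun l => (((l : ℝ)) + (tbar : ℝ) + 1) * φ l) tbar J,
            Finset.mul_sum, Finset.mul_sum, ← Finset.sum_add_distrib]
          exact Finset.sum_congr rfl fun j _ => hgrec j
        have h1 : ∑ j ∈ Finset.range J, ((j : ℝ) + 1) * φ j ≤ K + S := by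
          have : ∑ j ∈ Finset.range J, ((j : ℝ) + 1) * φ j
              = ∑ j ∈ Finset.range J, (j : ℝ) * φ j + ∑ j ∈ Finset.range J, φ j := by
            rw [← Finset.sum_add_distrib]; exact Finset.sum_congr rfl fun j _ => by ring
          rw [this]
          exact add_le_add (ih J (by omega)) (hPS J)
        have h2 : ∑ l ∈ Finset.range (J - tbar), (((l : ℝ)) + (tbar : ℝ) + 1) * φ l
            ≤ K + ((tbar : ℝ) + 1) * S := by
          have e2 : ∑ l ∈ Finset.range (J - tbar), (((l : ℝ)) + (tbar : ℝ) + 1) * φ l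
              = ∑ l ∈ Finset.range (J - tbar), (l : ℝ) * φ l
                + ((tbar : ℝ) + 1) * ∑ l ∈ Finset.range (J - tbar), φ l := by
            rw [Finset.mul_sum, ← Finset.sum_add_distrib]
            exact Finset.sum_congr rfl fun l _ => by ring
          rw [e2]
          have hb1 : ∑ l ∈ Finset.range (J - tbar), (l : ℝ) * φ l ≤ K := by
            rcases Nat.eq_zero_or_pos J with h | h
            · subst h; simpa using hKnn
            · exact ih (J - tbar) (by omega)
          have hb2 : ((tbar : ℝ) + 1) * ∑ l ∈ Finset.range (J - tbar), φ l
              ≤ ((tbar : ℝ) + 1) * S := by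
            apply mul_le_mul_of_nonneg_left (hPS _) (by positivity)
          linarith
        rw [e1]
        have := mul_le_mul_of_nonneg_left h1 hα0
        have := mul_le_mul_of_nonneg_left h2 hβ0
        simp only [Nat.cast_zero, zero_mul, add_zero]
        nlinarith [hS, hK]
  have hgnn : ∀ j : ℕ, 0 ≤ (j : ℝ) * φ j := fun j => mul_nonneg (by positivity) (hφnn j)
  have hgsum : Summable (fun j : ℕ => (j : ℝ) * φ j) := summable_of_sum_range_le hgnn hMbound
  set M : ℝ := ∑' j : ℕ, (j : ℝ) * φ j with hMdef
  have hMnn : 0 ≤ M := tsum_nonneg hgnn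
  have hM : lam_e * M = (α + β * ((tbar : ℝ) + 1)) * S := by
    have hFnn : ∀ l : ℕ, 0 ≤ (((l : ℝ)) + (tbar : ℝ) + 1) * φ l :=
      fun l => mul_nonneg (by positivity) (hφnn l)
    have hFsum : Summable (fun l : ℕ => (((l : ℝ)) + (tbar : ℝ) + 1) * φ l) := by
      have : (fun l : ℕ => (((l : ℝ)) + (tbar : ℝ) + 1) * φ l)
          = fun l : ℕ => (l : ℝ) * φ l + ((tbar : ℝ) + 1) * φ l := by
        funext l; ring
      rw [this]
      exact hgsum.add (hφsum.mul_left _)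
    have hFts : ∑' l : ℕ, (((l : ℝ)) + (tbar : ℝ) + 1) * φ l = M + ((tbar : ℝ) + 1) * S := by
      have : ∑' l : ℕ, (((l : ℝ)) + (tbar : ℝ) + 1) * φ l
          = ∑' l : ℕ, ((l : ℝ) * φ l + ((tbar : ℝ) + 1) * φ l) :=
        tsum_congr fun l => by ring
      rw [this, Summable.tsum_add hgsum (hφsum.mul_left _), tsum_mul_left]
    have hFshift := aux_shift_tsum _ hFnn hFsum tbar
    have hgsum1 : Summable (fun j : ℕ => ((j : ℝ) + 1) * φ j) := by
      have : (fun j : ℕ => ((j : ℝ) + 1) * φ j) = fun j : ℕ => (j : ℝ) * φ j + φ j := by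
        funext j; ring
      rw [this]; exact hgsum.add hφsum
    have hgts1 : ∑' j : ℕ, ((j : ℝ) + 1) * φ j = M + S := by
      have : ∑' j : ℕ, ((j : ℝ) + 1) * φ j = ∑' j : ℕ, ((j : ℝ) * φ j + φ j) :=
        tsum_congr fun j => by ring
      rw [this, Summable.tsum_add hgsum hφsum]
    have h1 : M = 0 + ∑' j : ℕ, (((j : ℕ) : ℝ) + 1) * φ (j + 1) := by
      rw [hMdef]
      have := Summable.tsum_eq_zero_add hgsum
      simpa using this
    have h2 : ∑' j : ℕ, (((j : ℕ) : ℝ) + 1) * φ (j + 1)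
        = α * (M + S) + β * (M + ((tbar : ℝ) + 1) * S) := by
      have hs1 : Summable fun j : ℕ => α * (((j : ℝ) + 1) * φ j) := hgsum1.mul_left α
      have hs2 : Summable fun j : ℕ => β * (if tbar ≤ j then
          (((j - tbar : ℕ) : ℝ) + (tbar : ℝ) + 1) * φ (j - tbar) else 0) :=
        hFshift.1.mul_left β
      calc ∑' j : ℕ, (((j : ℕ) : ℝ) + 1) * φ (j + 1)
          = ∑' j : ℕ, (α * (((j : ℝ) + 1) * φ j)
            + β * (if tbar ≤ j then (((j - tbar : ℕ) : ℝ) + (tbar : ℝ) + 1) * φ (j - tbar) else 0)) :=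
            tsum_congr hgrec
        _ = α * (M + S) + β * (M + ((tbar : ℝ) + 1) * S) := by
            rw [Summable.tsum_add hs1 hs2, tsum_mul_left, tsum_mul_left, hgts1, hFshift.2, hFts]
    linear_combination h1 + h2 + M * hαβ
  -- tails of φ
  set T : ℕ → ℝ := fun k => S - ∑ l ∈ Finset.range k, φ l with hT
  have hTval : ∀ k, T k = S - ∑ l ∈ Finset.range k, φ l := fun k => rfl
  have hTnn : ∀ k, 0 ≤ T k := by
    intro k; rw [hTval]; linarith [hPS k]
  have hTtail : ∀ k, T k = ∑' l : ℕ, φ (l + k) := by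
    intro k
    have := Summable.sum_add_tsum_nat_add k hφsum
    rw [hTval]
    linarith [this]
  have hTstep : ∀ k, T k = T (k + 1) + φ k := by
    intro k; rw [hTval, hTval, Finset.sum_range_succ]; ring
  have hT0 : T 0 = S := by rw [hTval]; simp
  -- key identity for partial sums of tails
  have I1 : ∀ J, ∑ m ∈ Finset.range J, T (m + 1)
      = (J : ℝ) * T J + ∑ l ∈ Finset.range J, (l : ℝ) * φ l := by
    intro J
    induction J with
    | zero => simp
    | succ J ih =>
      rw [Finset.sum_range_succ, ih, Finset.sum_range_succ ((fun l : ℕ => (l : ℝ) * φ l))]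
      push_cast
      linear_combination (J : ℝ) * hTstep J
  have B1 : ∀ J : ℕ, (J : ℝ) * T J + ∑ l ∈ Finset.range J, (l : ℝ) * φ l ≤ M := by
    intro J
    have hgshift : Summable (fun l : ℕ => ((l + J : ℕ) : ℝ) * φ (l + J)) := by
      have := (summable_nat_add_iff (f := fun j : ℕ => (j : ℝ) * φ j) J).2 hgsum
      simpa using this
    have hφshift : Summable (fun l : ℕ => φ (l + J)) :=
      (summable_nat_add_iff (f := φ) J).2 hφsum
    have h3 := Summable.sum_add_tsum_nat_add J hgsum
    have h1 : (J : ℝ) * T J = ∑' l : ℕ, (J : ℝ) * φ (l + J) := by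
      rw [hTtail J]; exact tsum_mul_left.symm
    have h2 : ∑' l : ℕ, (J : ℝ) * φ (l + J) ≤ ∑' l : ℕ, ((l + J : ℕ) : ℝ) * φ (l + J) := by
      refine Summable.tsum_le_tsum (fun l => ?_) (hφshift.mul_left _) hgshift
      apply mul_le_mul_of_nonneg_right _ (hφnn _)
      push_cast
      linarith [Nat.cast_nonneg (α := ℝ) l]
    linarith [h1, h2, h3]
  have hTT : Tendsto (fun J => ∑ m ∈ Finset.range J, T (m + 1)) atTop (nhds M) := by
    apply tendsto_of_tendsto_of_tendsto_of_le_of_le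
      (hgsum.hasSum.tendsto_sum_nat) (tendsto_const_nhds (x := M))
    · intro J
      show ∑ l ∈ Finset.range J, (l : ℝ) * φ l ≤ ∑ m ∈ Finset.range J, T (m + 1)
      rw [I1 J]
      have : 0 ≤ (J : ℝ) * T J := mul_nonneg (by positivity) (hTnn J)
      linarith
    · intro J
      show ∑ m ∈ Finset.range J, T (m + 1) ≤ M
      rw [I1 J]
      exact B1 J
  -- the sequence u
  set u : ℕ → ℝ := fun j => T (j + 1 - tbar) with hu
  have hunn : ∀ j, 0 ≤ u j := fun j => hTnn _
  have I2 : ∀ J, ∑ j ∈ Finset.range J, u j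
      = ((min J tbar : ℕ) : ℝ) * S + ∑ m ∈ Finset.range (J - tbar), T (m + 1) := by
    intro J
    induction J with
    | zero => simp
    | succ J ih =>
      rw [Finset.sum_range_succ, ih]
      by_cases h : tbar ≤ J
      · have e1 : min (J + 1) tbar = min J tbar := by omega
        have e2 : J + 1 - tbar = (J - tbar) + 1 := by omega
        have e3 : u J = T ((J - tbar) + 1) := by
          show T (J + 1 - tbar) = _
          rw [show J + 1 - tbar = (J - tbar) + 1 from by omega]
        rw [e1, e2, e3, Finset.sum_range_succ]
        ring
      · have e1 : J + 1 - tbar = 0 := by omega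
        have e2 : J - tbar = 0 := by omega
        have e3 : u J = T 0 := by
          show T (J + 1 - tbar) = _
          rw [show J + 1 - tbar = 0 from by omega]
        have e4 : min (J + 1) tbar = J + 1 := by omega
        have e5 : min J tbar = J := by omega
        rw [e1, e2, e3, e4, e5, hT0]
        push_cast
        ring
  have hubound : ∀ J, ∑ j ∈ Finset.range J, u j ≤ (tbar : ℝ) * S + M := by
    intro J
    rw [I2 J]
    have h1 : ((min J tbar : ℕ) : ℝ) * S ≤ (tbar : ℝ) * S := by
      apply mul_le_mul_of_nonneg_right _ hSnn
      exact_mod_cast Nat.cast_le.2 (min_le_right J tbar)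
    have h2 : ∑ m ∈ Finset.range (J - tbar), T (m + 1) ≤ M := by
      rw [I1]
      exact B1 _
    linarith
  have hul : Tendsto (fun J => ∑ j ∈ Finset.range J, u j) atTop (nhds ((tbar : ℝ) * S + M)) := by
    have h1 : Tendsto (fun J => ∑ m ∈ Finset.range (J - tbar), T (m + 1)) atTop (nhds M) :=
      hTT.comp (tendsto_sub_atTop_nat tbar)
    have h2 : Tendsto (fun J => (tbar : ℝ) * S + ∑ m ∈ Finset.range (J - tbar), T (m + 1))
        atTop (nhds ((tbar : ℝ) * S + M)) := tendsto_const_nhds.add h1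
    apply Tendsto.congr' _ h2
    filter_upwards [eventually_ge_atTop tbar] with J hJ
    rw [I2 J, show min J tbar = tbar from by omega]
  obtain ⟨husum, hutsum⟩ := aux_tsum_eq hunn hubound hul
  -- recurrence for ω
  have hωrec : ∀ j, ω (j + 1) = α * ω j + lam_e * u j := by
    intro j
    by_cases h : j + 1 ≤ tbar
    · rw [hω1 (j + 1) (by omega) h]
      simp only [Nat.add_sub_cancel]
      have e3 : u j = T 0 := by
        show T (j + 1 - tbar) = _
        rw [show j + 1 - tbar = 0 from by omega]
      rw [e3, hT0]
      linarith [hS]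
    · rw [hω2 (j + 1) (by omega)]
      simp only [Nat.add_sub_cancel]
      have e3 : u j = S - ∑ l ∈ Finset.range (j + 1 - tbar), φ l := by rw [hu]
      rw [e3]
      linarith [hS]
  have hωnn : ∀ j, 0 ≤ ω j := by
    intro j
    induction j with
    | zero => rw [hω0]; positivity
    | succ j ih =>
      rw [hωrec j]
      exact add_nonneg (mul_nonneg hα0 ih) (mul_nonneg (le_of_lt hle0) (hunn j))
  set C : ℝ := (ω 0 + lam_e * ((tbar : ℝ) * S + M)) / (1 - α) with hCdef
  have hω0nn : 0 ≤ ω 0 := hωnn 0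
  have hC : (1 - α) * C = ω 0 + lam_e * ((tbar : ℝ) * S + M) := by
    rw [hCdef]; field_simp
  have hCnn : 0 ≤ C := by
    apply div_nonneg _ (le_of_lt h1α)
    have : 0 ≤ (tbar : ℝ) * S + M := by positivity
    positivity
  have hWbound : ∀ J, ∑ j ∈ Finset.range J, ω j ≤ C := by
    intro J
    induction J with
    | zero => simpa using hCnn
    | succ J ih =>
      rw [Finset.sum_range_succ']
      have e1 : ∑ j ∈ Finset.range J, ω (j + 1)
          = α * ∑ j ∈ Finset.range J, ω j + lam_e * ∑ j ∈ Finset.range J, u j := by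
        rw [Finset.mul_sum, Finset.mul_sum, ← Finset.sum_add_distrib]
        exact Finset.sum_congr rfl fun j _ => hωrec j
      rw [e1]
      have h1 : α * ∑ j ∈ Finset.range J, ω j ≤ α * C := mul_le_mul_of_nonneg_left ih hα0
      have h2 : lam_e * ∑ j ∈ Finset.range J, u j ≤ lam_e * ((tbar : ℝ) * S + M) :=
        mul_le_mul_of_nonneg_left (hubound J) (le_of_lt hle0)
      linarith [hC]
  have hωsum : Summable ω := summable_of_sum_range_le hωnn hWbound
  set W : ℝ := ∑' j, ω j with hWdef
  have hW1 : W = 1 := by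
    have h1 : W = ω 0 + ∑' j : ℕ, ω (j + 1) := Summable.tsum_eq_zero_add hωsum
    have h2 : ∑' j : ℕ, ω (j + 1) = α * W + lam_e * ((tbar : ℝ) * S + M) := by
      have hs1 : Summable fun j : ℕ => α * ω j := hωsum.mul_left α
      have hs2 : Summable fun j : ℕ => lam_e * u j := husum.mul_left lam_e
      calc ∑' j : ℕ, ω (j + 1) = ∑' j : ℕ, (α * ω j + lam_e * u j) := tsum_congr hωrec
        _ = α * W + lam_e * ((tbar : ℝ) * S + M) := by
            rw [Summable.tsum_add hs1 hs2, tsum_mul_left, tsum_mul_left, hutsum]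
    have hfin : (1 - α) * W = ω 0 + lam_e * ((tbar : ℝ) * S) + lam_e * M := by
      linear_combination h1 + h2
    have hSv : S = lam / (lam * (tbar : ℝ) + 1) := by
      have he : lam_e * S = lam_e * (lam / (lam * (tbar : ℝ) + 1)) := by
        rw [hS, hφ0]; ring
      exact mul_left_cancel₀ (ne_of_gt hle0) he
    have hMv : lam_e * M = (α + β * ((tbar : ℝ) + 1)) * (lam / (lam * (tbar : ℝ) + 1)) := by
      rw [hM, hSv]
    have h4 : (1 - α) * W = (1 - α) * 1 := by
      rw [hfin, hω0, hSv, hMv, mul_one, hα, hβ]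
      field_simp
      ring
    exact mul_left_cancel₀ (ne_of_gt h1α) h4
  -- monotonicity of c
  have hDpsd : ∀ j : ℕ, ((fun X => A * X * Aᵀ + Q)^[j + 1] Pbar
      - (fun X => A * X * Aᵀ + Q)^[j] Pbar).PosSemidef := by
    intro j
    induction j with
    | zero => simpa using hloewner
    | succ j ih =>
      have e1 : (fun X => A * X * Aᵀ + Q)^[j + 2] Pbar
          - (fun X => A * X * Aᵀ + Q)^[j + 1] Pbar
          = A * ((fun X => A * X * Aᵀ + Q)^[j + 1] Pbar
              - (fun X => A * X * Aᵀ + Q)^[j] Pbar) * Aᵀ := by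
        rw [Function.iterate_succ_apply' (fun X => A * X * Aᵀ + Q) (j + 1),
          Function.iterate_succ_apply' (fun X => A * X * Aᵀ + Q) j]
        noncomm_ring
      rw [e1, ← conjTranspose_eq_transpose_of_trivial]
      exact ih.mul_mul_conjTranspose_same A
  have hcmono : Monotone c := by
    apply monotone_nat_of_le_succ
    intro j
    rw [hc j, hc (j + 1)]
    have h1 := aux_trace_nonneg (hDpsd j)
    rw [Matrix.trace_sub] at h1
    linarith
  -- final assembly
  intro N
  have htailω : Summable (fun j : ℕ => ω (j + (N + 1))) :=
    (summable_nat_add_iff (f := ω) (N + 1)).2 hωsum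
  have htailc : Summable (fun j : ℕ => ω (j + (N + 1)) * c (j + (N + 1))) :=
    (summable_nat_add_iff (f := fun j => ω j * c j) (N + 1)).2 hsum
  have h1 := Summable.sum_add_tsum_nat_add (f := fun j => ω j * c j) (N + 1) hsum
  have h2 : ∑ j ∈ Finset.range (N + 1), ω j + ∑' j : ℕ, ω (j + (N + 1)) = 1 := by
    rw [Summable.sum_add_tsum_nat_add (f := ω) (N + 1) hωsum, ← hWdef, hW1]
  have h3 : ∑' j : ℕ, ω (j + (N + 1)) * c (N + 1)
      ≤ ∑' j : ℕ, ω (j + (N + 1)) * c (j + (N + 1)) := by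
    refine Summable.tsum_le_tsum (fun j => ?_) (htailω.mul_right _) htailc
    exact mul_le_mul_of_nonneg_left (hcmono (by omega : N + 1 ≤ j + (N + 1))) (hωnn _)
  rw [tsum_mul_right] at h3
  rw [show (1 : ℝ) - ∑ j ∈ Finset.range (N + 1), ω j = ∑' x : ℕ, ω (x + (N + 1)) from by
    linarith [h2]]
  linarith [h1, h3]
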